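/- Let (X,d) be a complete metric space, M a nonempty proper closed subset of X, and F : X∖M → (0,∞) a positive function that admits a continuous extension F̃ : X → [0,∞) with F̃(x) = 0 for every x ∈ M. Then the metric space (X∖M, v), where v(x,y) = 2·log((d(x,y) + max{F(x), F(y)}) / √(F(x)·F(y))), is complete: every Cauchy sequence in (X∖M, v) converges in (X∖M, v). -/

import Mathlib

open Real Filter

/-- Generalized Ibragimov function. -/
noncomputable def vIb {X : Type*} [MetricSpace X] (F : X → ℝ) (x y : X) : ℝ :=
  2 * Real.log ((dist x y + max (F x) (F y)) / Real.sqrt (F x * F y))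

lemma vIb_lt_key {X : Type*} [MetricSpace X] {F : X → ℝ} {x y : X}
    (hx : 0 < F x) (hy : 0 < F y) {ε : ℝ} (h : vIb F x y < ε) :
    dist x y + max (F x) (F y) < Real.exp (ε / 2) * Real.sqrt (F x * F y) := by
  have hs : 0 < Real.sqrt (F x * F y) := Real.sqrt_pos.2 (mul_pos hx hy)
  have hnum : 0 < dist x y + max (F x) (F y) :=
    add_pos_of_nonneg_of_pos dist_nonneg (lt_max_of_lt_left hx)
  have hr : 0 < (dist x y + max (F x) (F y)) / Real.sqrt (F x * F y) := div_pos hnum hs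
  have hlog : Real.log ((dist x y + max (F x) (F y)) / Real.sqrt (F x * F y)) < ε / 2 := by
    unfold vIb at h; linarith
  have hrK : (dist x y + max (F x) (F y)) / Real.sqrt (F x * F y) < Real.exp (ε / 2) := by
    rw [← Real.exp_log hr]
    exact Real.exp_lt_exp.2 hlog
  calc dist x y + max (F x) (F y)
      = (dist x y + max (F x) (F y)) / Real.sqrt (F x * F y) * Real.sqrt (F x * F y) := by
        field_simp
    _ < Real.exp (ε / 2) * Real.sqrt (F x * F y) := by
        exact mul_lt_mul_of_pos_right hrK hs

lemma vIb_ratio {X : Type*} [MetricSpace X] {F : X → ℝ} {x y : X}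
    (hx : 0 < F x) (hy : 0 < F y) {ε : ℝ} (h : vIb F x y < ε) :
    max (F x) (F y) < Real.exp ε * min (F x) (F y) := by
  have hkey := vIb_lt_key hx hy h
  have hmaxpos : 0 < max (F x) (F y) := lt_max_of_lt_left hx
  have hminpos : 0 < min (F x) (F y) := lt_min hx hy
  have hprod : F x * F y = max (F x) (F y) * min (F x) (F y) := by
    rcases le_total (F x) (F y) with h' | h'
    · rw [max_eq_right h', min_eq_left h']; ring
    · rw [max_eq_left h', min_eq_right h']
  have hsqrt : Real.sqrt (F x * F y)
      = Real.sqrt (max (F x) (F y)) * Real.sqrt (min (F x) (F y)) := by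
    rw [hprod, Real.sqrt_mul hmaxpos.le]
  set A := Real.sqrt (max (F x) (F y)) with hA
  set B := Real.sqrt (min (F x) (F y)) with hB
  have hA2 : A * A = max (F x) (F y) := Real.mul_self_sqrt hmaxpos.le
  have hB2 : B * B = min (F x) (F y) := Real.mul_self_sqrt hminpos.le
  have hApos : 0 < A := Real.sqrt_pos.2 hmaxpos
  have hBpos : 0 < B := Real.sqrt_pos.2 hminpos
  have hKpos : 0 < Real.exp (ε / 2) := Real.exp_pos _
  have hmain : A * A < Real.exp (ε / 2) * (A * B) := by
    rw [hA2, ← hsqrt]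
    have : max (F x) (F y) ≤ dist x y + max (F x) (F y) := by
      linarith [dist_nonneg (x := x) (y := y)]
    linarith
  have hexp : Real.exp (ε / 2) * Real.exp (ε / 2) = Real.exp ε := by
    rw [← Real.exp_add]; ring_nf
  rw [← hA2, ← hB2, ← hexp]
  nlinarith [sq_nonneg (A - Real.exp (ε / 2) * B)]

theorem stmt_19 {X : Type*} [MetricSpace X] [CompleteSpace X] (M : Set X)
    (hMclosed : IsClosed M) (hMne : M.Nonempty) (hMproper : M ≠ Set.univ)
    (F : X → ℝ) (hFpos : ∀ x ∉ M, 0 < F x)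
    (Ftilde : X → ℝ) (hFtCont : Continuous Ftilde)
    (hFtM : ∀ x ∈ M, Ftilde x = 0) (hFtF : ∀ x ∉ M, Ftilde x = F x) :
    ∀ u : ℕ → X, (∀ n, u n ∉ M) →
      (∀ ε > (0 : ℝ), ∃ N : ℕ, ∀ m ≥ N, ∀ n ≥ N, vIb F (u m) (u n) < ε) →
      ∃ x, x ∉ M ∧ Tendsto (fun n => vIb F (u n) x) atTop (nhds 0) := by
  intro u hu hC
  have hFu : ∀ n, 0 < F (u n) := fun n => hFpos _ (hu n)
  obtain ⟨N1, hN1⟩ := hC 2 (by norm_num)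
  set a := F (u N1) with ha
  have haP : 0 < a := hFu N1
  set δ := a / Real.exp 2 with hδdef
  set C := Real.exp 2 * a with hCdef
  have hδ : 0 < δ := div_pos haP (Real.exp_pos 2)
  have hCpos : 0 < C := mul_pos (Real.exp_pos 2) haP
  have hbound : ∀ n ≥ N1, δ ≤ F (u n) ∧ F (u n) ≤ C := by
    intro n hn
    have h := vIb_ratio (hFu N1) (hFu n) (hN1 N1 le_rfl n hn)
    have h1 : a ≤ max a (F (u n)) := le_max_left _ _
    have h2 : min a (F (u n)) ≤ F (u n) := min_le_right _ _
    have h3 : F (u n) ≤ max a (F (u n)) := le_max_right _ _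
    have h4 : min a (F (u n)) ≤ a := min_le_left _ _
    have hE : 0 < Real.exp 2 := Real.exp_pos 2
    constructor
    · rw [hδdef, div_le_iff₀ hE]
      nlinarith
    · rw [hCdef]
      nlinarith
  -- u is d-Cauchy
  have hcauchyd : CauchySeq u := by
    rw [Metric.cauchySeq_iff]
    intro ε' hε'
    set K := 1 + ε' / C with hKdef
    have hK1 : 1 < K := by
      rw [hKdef]
      have : 0 < ε' / C := div_pos hε' hCpos
      linarith
    have hKpos : 0 < K := by linarith
    have hlogK : 0 < Real.log K := Real.log_pos hK1
    obtain ⟨N2, hN2⟩ := hC (2 * Real.log K) (by linarith)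
    refine ⟨max N1 N2, fun m hm n hn => ?_⟩
    have hmN1 := hbound m (le_trans (le_max_left _ _) hm)
    have hnN1 := hbound n (le_trans (le_max_left _ _) hn)
    have h := vIb_lt_key (hFu m) (hFu n)
      (hN2 m (le_trans (le_max_right _ _) hm) n (le_trans (le_max_right _ _) hn))
    have hexp : Real.exp (2 * Real.log K / 2) = K := by
      rw [show (2 : ℝ) * Real.log K / 2 = Real.log K by ring, Real.exp_log hKpos]
    rw [hexp] at h
    -- sqrt ≤ max
    have hmaxpos : 0 < max (F (u m)) (F (u n)) := lt_max_of_lt_left (hFu m)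
    have hsle : Real.sqrt (F (u m) * F (u n)) ≤ max (F (u m)) (F (u n)) := by
      have : F (u m) * F (u n) ≤ max (F (u m)) (F (u n)) * max (F (u m)) (F (u n)) := by
        have := le_max_left (F (u m)) (F (u n))
        have := le_max_right (F (u m)) (F (u n))
        nlinarith [hFu m, hFu n]
      calc Real.sqrt (F (u m) * F (u n))
          ≤ Real.sqrt (max (F (u m)) (F (u n)) * max (F (u m)) (F (u n))) :=
            Real.sqrt_le_sqrt this
        _ = max (F (u m)) (F (u n)) := Real.sqrt_mul_self hmaxpos.le
    have hmaxC : max (F (u m)) (F (u n)) ≤ C := max_le hmN1.2 hnN1.2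
    have hKC : (K - 1) * C = ε' := by
      rw [hKdef]; field_simp; ring
    nlinarith [mul_le_mul_of_nonneg_left hsle hKpos.le,
      mul_le_mul_of_nonneg_left hmaxC (by linarith : (0:ℝ) ≤ K - 1)]
  obtain ⟨x, hx⟩ := cauchySeq_tendsto_of_complete hcauchyd
  have hFt : Tendsto (fun n => F (u n)) atTop (nhds (Ftilde x)) := by
    have h1 : Tendsto (fun n => Ftilde (u n)) atTop (nhds (Ftilde x)) :=
      (hFtCont.tendsto x).comp hx
    have heq : (fun n => Ftilde (u n)) = fun n => F (u n) :=
      funext fun n => hFtF _ (hu n)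
    rwa [heq] at h1
  have hFxδ : δ ≤ Ftilde x :=
    ge_of_tendsto hFt (eventually_atTop.2 ⟨N1, fun n hn => (hbound n hn).1⟩)
  have hxM : x ∉ M := by
    intro hmem
    have := hFtM x hmem
    linarith
  have hFxeq : Ftilde x = F x := hFtF x hxM
  have hFxpos : 0 < F x := by rw [← hFxeq]; linarith
  refine ⟨x, hxM, ?_⟩
  have hd0 : Tendsto (fun n => dist (u n) x) atTop (nhds 0) :=
    tendsto_iff_dist_tendsto_zero.mp hx
  have hFt' : Tendsto (fun n => F (u n)) atTop (nhds (F x)) := hFxeq ▸ hFt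
  have hmax : Tendsto (fun n => max (F (u n)) (F x)) atTop (nhds (max (F x) (F x))) :=
    hFt'.max tendsto_const_nhds
  have hmul : Tendsto (fun n => F (u n) * F x) atTop (nhds (F x * F x)) :=
    hFt'.mul tendsto_const_nhds
  have hsqrt : Tendsto (fun n => Real.sqrt (F (u n) * F x)) atTop
      (nhds (Real.sqrt (F x * F x))) :=
    (Real.continuous_sqrt.tendsto _).comp hmul
  have hden : Real.sqrt (F x * F x) = F x := Real.sqrt_mul_self hFxpos.le
  have hdiv : Tendsto (fun n => (dist (u n) x + max (F (u n)) (F x)) /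
      Real.sqrt (F (u n) * F x)) atTop (nhds 1) := by
    have h := (hd0.add hmax).div hsqrt (by rw [hden]; exact hFxpos.ne')
    have : (0 + max (F x) (F x)) / Real.sqrt (F x * F x) = 1 := by
      rw [hden, max_self, zero_add, div_self hFxpos.ne']
    rwa [this] at h
  have hlog : Tendsto (fun n => Real.log ((dist (u n) x + max (F (u n)) (F x)) /
      Real.sqrt (F (u n) * F x))) atTop (nhds (Real.log 1)) :=
    ((Real.continuousAt_log one_ne_zero).tendsto).comp hdiv
  have hfin : Tendsto (fun n => vIb F (u n) x) atTop (nhds (2 * Real.log 1)) := by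
    unfold vIb
    exact hlog.const_mul 2
  simpa using hfin
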